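/- With 𝐀 the pn×pn block companion matrix (identity superdiagonal blocks, A in the bottom-left block), 𝐁 = [0;…;0;B]ᵀ-stacked, 𝐂 = [C,0,…,0]: the transfer function 𝐂 (sI − 𝐀)^{−1} 𝐁 equals C (s^p I − A)^{−1} B, for all s ∈ ℂ such that s^p is not an eigenvalue of A. -/

import Mathlib

lemma sum_fin_ite {p : ℕ} (m : ℕ) (f : Fin p → ℂ) :
    (∑ k : Fin p, if (k : ℕ) = m then f k else 0) =
      if h : m < p then f ⟨m, h⟩ else 0 := by
  split
  · next h =>
    rw [Finset.sum_eq_single (⟨m, h⟩ : Fin p)]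
    · simp
    · intro k _ hk
      rw [if_neg]
      simpa [Fin.ext_iff] using hk
    · simp
  · next h =>
    apply Finset.sum_eq_zero
    intro k _
    rw [if_neg]
    have := k.isLt
    omega

/-- The augmented fractional realization has the original input-output behavior:
`CC (sI - AA)⁻¹ BB = C (s^p I - A)⁻¹ B` for all `s` such that `s^p` is not an
eigenvalue of `A`. -/
theorem augmented_realization_transfer_function
    (n p : ℕ) (hp : 1 ≤ p)
    (A : Matrix (Fin n) (Fin n) ℂ) (B : Matrix (Fin n) (Fin 1) ℂ)
    (C : Matrix (Fin 1) (Fin n) ℂ)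
    (AA : Matrix (Fin p × Fin n) (Fin p × Fin n) ℂ)
    (BB : Matrix (Fin p × Fin n) (Fin 1) ℂ)
    (CC : Matrix (Fin 1) (Fin p × Fin n) ℂ)
    (hAA : ∀ (i j : Fin p) (a b : Fin n),
      AA (i, a) (j, b) =
        if (j : ℕ) = (i : ℕ) + 1 then (if a = b then 1 else 0)
        else if (i : ℕ) = p - 1 ∧ (j : ℕ) = 0 then A a b else 0)
    (hBB : ∀ (i : Fin p) (a : Fin n) (j : Fin 1),
      BB (i, a) j = if (i : ℕ) = p - 1 then B a j else 0)
    (hCC : ∀ (i : Fin 1) (j : Fin p) (b : Fin n),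
      CC i (j, b) = if (j : ℕ) = 0 then C i b else 0)
    (s : ℂ) (hs : s ^ p ∉ spectrum ℂ A) :
    CC * (s • (1 : Matrix (Fin p × Fin n) (Fin p × Fin n) ℂ) - AA)⁻¹ * BB =
      C * (s ^ p • (1 : Matrix (Fin n) (Fin n) ℂ) - A)⁻¹ * B := by
  have hp1 : 0 < p := hp
  have hA : IsUnit (s ^ p • (1 : Matrix (Fin n) (Fin n) ℂ) - A) := by
    rw [spectrum.notMem_iff] at hs
    rwa [Algebra.algebraMap_eq_smul_one] at hs
  set R : Matrix (Fin n) (Fin n) ℂ := (s ^ p • (1 : Matrix (Fin n) (Fin n) ℂ) - A)⁻¹ with hRdef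
  have hdet : IsUnit (s ^ p • (1 : Matrix (Fin n) (Fin n) ℂ) - A).det :=
    (Matrix.isUnit_iff_isUnit_det _).mp hA
  have hR1 : (s ^ p • (1 : Matrix (Fin n) (Fin n) ℂ) - A) * R = 1 :=
    Matrix.mul_nonsing_inv _ hdet
  have hARs : s ^ p • R - A * R = 1 := by
    rw [← hR1, Matrix.sub_mul, Matrix.smul_mul, Matrix.one_mul]
  have key : ∀ a b : Fin n, s ^ p * R a b - (A * R) a b = if a = b then 1 else 0 := by
    intro a b
    have h := congrFun (congrFun hARs a) b
    simpa [Matrix.sub_apply, Matrix.one_apply] using h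
  have hpow : ∀ m k : ℕ, m + 1 = k → s * s ^ m = s ^ k := by
    intro m k h; subst h; rw [pow_succ]; ring
  set M : Matrix (Fin p × Fin n) (Fin p × Fin n) ℂ := fun x y =>
    (if (x.1 : ℕ) ≤ (y.1 : ℕ) then s ^ (p - 1 - (y.1 : ℕ) + (x.1 : ℕ)) else 0) * R x.2 y.2 +
    (if (y.1 : ℕ) < (x.1 : ℕ) then s ^ ((x.1 : ℕ) - (y.1 : ℕ) - 1) else 0) * (A * R) x.2 y.2
    with hMdef
  have hM0 : ∀ (c b : Fin n) (j : Fin p) (h0 : 0 < p),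
      M (⟨0, h0⟩, c) (j, b) = s ^ (p - 1 - (j : ℕ)) * R c b := by
    intro c b j h0
    have h1 : (((⟨0, h0⟩ : Fin p) : ℕ)) ≤ (j : ℕ) := Nat.zero_le _
    have h2 : ¬ ((j : ℕ) < ((⟨0, h0⟩ : Fin p) : ℕ)) := Nat.not_lt_zero _
    simp only [hMdef, if_pos h1, if_neg h2, zero_mul, add_zero]
  have hAAM : ∀ (i : Fin p) (a : Fin n) (j : Fin p) (b : Fin n),
      (AA * M) (i, a) (j, b) =
        (if h : (i : ℕ) + 1 < p then M (⟨(i : ℕ) + 1, h⟩, a) (j, b) else 0) +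
        (if (i : ℕ) = p - 1 then s ^ (p - 1 - (j : ℕ)) * (A * R) a b else 0) := by
    intro i a j b
    rw [Matrix.mul_apply, Fintype.sum_prod_type]
    have hrow : ∀ k : Fin p, (∑ c, AA (i, a) (k, c) * M (k, c) (j, b)) =
        (if (k : ℕ) = (i : ℕ) + 1 then M (k, a) (j, b) else 0) +
        (if (i : ℕ) = p - 1 then
          (if (k : ℕ) = 0 then s ^ (p - 1 - (j : ℕ)) * (A * R) a b else 0) else 0) := by
      intro k
      by_cases hk : (k : ℕ) = (i : ℕ) + 1
      · have hterm : ∀ c, AA (i, a) (k, c) = if a = c then 1 else 0 := by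
          intro c; rw [hAA, if_pos hk]
        rw [Finset.sum_congr rfl (fun c _ => by rw [hterm c]), if_pos hk]
        have h2 : (if (i : ℕ) = p - 1 then
            (if (k : ℕ) = 0 then s ^ (p - 1 - (j : ℕ)) * (A * R) a b else 0) else 0) = 0 := by
          split_ifs with h1 h2
          · omega
          · rfl
          · rfl
        rw [h2, add_zero]
        simp [ite_mul, Finset.sum_ite_eq]
      · by_cases hik : (i : ℕ) = p - 1 ∧ (k : ℕ) = 0
        · have hterm : ∀ c, AA (i, a) (k, c) = A a c := by
            intro c; rw [hAA, if_neg hk, if_pos hik]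
          rw [Finset.sum_congr rfl (fun c _ => by rw [hterm c]), if_neg hk, if_pos hik.1,
            if_pos hik.2, zero_add]
          have hm : ∀ c : Fin n, M (k, c) (j, b) = s ^ (p - 1 - (j : ℕ)) * R c b := by
            intro c
            have hkF : k = ⟨0, hp1⟩ := Fin.ext hik.2
            rw [hkF]
            exact hM0 c b j hp1
          rw [Finset.sum_congr rfl (fun c _ => by rw [hm c])]
          rw [Matrix.mul_apply, Finset.mul_sum]
          exact Finset.sum_congr rfl (fun c _ => by ring)
        · have hterm : ∀ c, AA (i, a) (k, c) = 0 := by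
            intro c; rw [hAA, if_neg hk, if_neg hik]
          rw [Finset.sum_congr rfl (fun c _ => by rw [hterm c]), if_neg hk]
          have h2 : (if (i : ℕ) = p - 1 then
              (if (k : ℕ) = 0 then s ^ (p - 1 - (j : ℕ)) * (A * R) a b else 0) else 0) = 0 := by
            split_ifs with h1 h2
            · exact absurd ⟨h1, h2⟩ hik
            · rfl
            · rfl
          rw [h2]
          simp
    rw [Finset.sum_congr rfl (fun k _ => hrow k), Finset.sum_add_distrib, sum_fin_ite]
    congr 1
    by_cases hi : (i : ℕ) = p - 1
    · simp only [hi, if_true, if_pos rfl]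
      rw [sum_fin_ite 0 (fun _ => s ^ (p - 1 - (j : ℕ)) * (A * R) a b), dif_pos hp1]
    · simp [hi]
  -- the inverse identity
  have hinv : (s • (1 : Matrix (Fin p × Fin n) (Fin p × Fin n) ℂ) - AA) * M = 1 := by
    ext ⟨i, a⟩ ⟨j, b⟩
    rw [Matrix.sub_mul, Matrix.smul_mul, Matrix.one_mul, Matrix.sub_apply, Matrix.smul_apply,
      hAAM, Matrix.one_apply, smul_eq_mul]
    simp only [Prod.mk.injEq]
    by_cases hi : (i : ℕ) + 1 < p
    · rw [dif_pos hi, if_neg (by omega : ¬ (i : ℕ) = p - 1), add_zero]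
      simp only [hMdef, Fin.val_mk]
      rcases lt_trichotomy (i : ℕ) (j : ℕ) with h | h | h
      · rw [if_pos (le_of_lt h), if_pos (by omega : (i : ℕ) + 1 ≤ (j : ℕ)), if_neg (by omega : ¬ (j : ℕ) < (i : ℕ)),
          if_neg (by omega : ¬ (j : ℕ) < (i : ℕ) + 1),
          if_neg (show ¬ (i = j ∧ a = b) from fun hc => by
            have := congrArg Fin.val hc.1; omega),
          show (p - 1 - (j : ℕ) + ((i : ℕ) + 1)) = (p - 1 - (j : ℕ) + (i : ℕ)) + 1 from by omega,
          pow_succ]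
        ring
      · have hij : i = j := Fin.ext h
        rw [if_pos (le_of_eq h), if_neg (by omega : ¬ (i : ℕ) + 1 ≤ (j : ℕ)),
          if_neg (by omega : ¬ (j : ℕ) < (i : ℕ)), if_pos (by omega : (j : ℕ) < (i : ℕ) + 1),
          show ((i : ℕ) + 1 - (j : ℕ) - 1) = 0 from by omega, pow_zero,
          show (p - 1 - (j : ℕ) + (i : ℕ)) = p - 1 from by omega,
          show (if i = j ∧ a = b then (1:ℂ) else 0) = if a = b then 1 else 0 from by simp [hij],
          ← key a b, ← hpow (p - 1) p (by omega)]
        ring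
      · rw [if_neg (by omega : ¬ (i : ℕ) ≤ (j : ℕ)), if_neg (by omega : ¬ (i : ℕ) + 1 ≤ (j : ℕ)),
          if_pos h, if_pos (by omega : (j : ℕ) < (i : ℕ) + 1),
          if_neg (show ¬ (i = j ∧ a = b) from fun hc => by
            have := congrArg Fin.val hc.1; omega),
          show ((i : ℕ) + 1 - (j : ℕ) - 1) = ((i : ℕ) - (j : ℕ) - 1) + 1 from by omega, pow_succ]
        ring
    · have hieq : (i : ℕ) = p - 1 := by have := i.isLt; omega
      rw [dif_neg hi, if_pos hieq, zero_add]
      simp only [hMdef]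
      by_cases hj : (j : ℕ) = p - 1
      · have hij : i = j := Fin.ext (by omega)
        rw [if_pos (by omega : (i : ℕ) ≤ (j : ℕ)), if_neg (by omega : ¬ (j : ℕ) < (i : ℕ)),
          show (p - 1 - (j : ℕ) + (i : ℕ)) = p - 1 from by omega,
          show (p - 1 - (j : ℕ)) = 0 from by omega, pow_zero,
          show (if i = j ∧ a = b then (1:ℂ) else 0) = if a = b then 1 else 0 from by simp [hij],
          ← key a b, ← hpow (p - 1) p (by omega)]
        ring
      · have hji : (j : ℕ) < (i : ℕ) := by have := j.isLt; omega
        rw [if_neg (by omega : ¬ (i : ℕ) ≤ (j : ℕ)), if_pos hji,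
          if_neg (show ¬ (i = j ∧ a = b) from fun hc => by
            have := congrArg Fin.val hc.1; omega),
          show (p - 1 - (j : ℕ)) = ((i : ℕ) - (j : ℕ) - 1) + 1 from by omega, pow_succ]
        ring
  have hinvM : (s • (1 : Matrix (Fin p × Fin n) (Fin p × Fin n) ℂ) - AA)⁻¹ = M :=
    Matrix.inv_eq_right_inv hinv
  rw [hinvM]
  ext i j
  rw [Matrix.mul_apply, Fintype.sum_prod_type]
  have hCM : ∀ (k : Fin p) (b : Fin n), (CC * M) i (k, b) =
      s ^ (p - 1 - (k : ℕ)) * (C * R) i b := by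
    intro k b
    rw [Matrix.mul_apply, Fintype.sum_prod_type]
    have hrow : ∀ l : Fin p, (∑ a, CC i (l, a) * M (l, a) (k, b)) =
        (if (l : ℕ) = 0 then ∑ a, C i a * M (l, a) (k, b) else 0) := by
      intro l
      by_cases hl : (l : ℕ) = 0
      · simp only [hCC, if_pos hl]
      · simp [hCC, hl]
    rw [Finset.sum_congr rfl (fun l _ => hrow l),
      sum_fin_ite 0 (fun l => ∑ a, C i a * M (l, a) (k, b)), dif_pos hp1]
    have hm : ∀ a : Fin n, M ((⟨0, hp1⟩ : Fin p), a) (k, b) = s ^ (p - 1 - (k : ℕ)) * R a b :=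
      fun a => hM0 a b k hp1
    rw [Finset.sum_congr rfl (fun a _ => by rw [hm a])]
    rw [Matrix.mul_apply, Finset.mul_sum]
    exact Finset.sum_congr rfl (fun a _ => by ring)
  have hcol : ∀ (k : Fin p) (b : Fin n), (CC * M) i (k, b) * BB (k, b) j =
      (if (k : ℕ) = p - 1 then s ^ (p - 1 - (k : ℕ)) * (C * R) i b * B b j else 0) := by
    intro k b
    rw [hCM, hBB]
    split_ifs <;> ring
  rw [Finset.sum_congr rfl (fun k _ => by
    rw [Finset.sum_congr rfl (fun b _ => hcol k b)])]
  have : ∀ k : Fin p, (∑ b, if (k : ℕ) = p - 1 then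
      s ^ (p - 1 - (k : ℕ)) * (C * R) i b * B b j else 0) =
      (if (k : ℕ) = p - 1 then ∑ b, s ^ (p - 1 - (k : ℕ)) * (C * R) i b * B b j else 0) := by
    intro k; split_ifs <;> simp
  rw [Finset.sum_congr rfl (fun k _ => this k),
    sum_fin_ite (p - 1) (fun k => ∑ b, s ^ (p - 1 - (k : ℕ)) * (C * R) i b * B b j),
    dif_pos (by omega : p - 1 < p)]
  rw [Matrix.mul_apply]
  simp only [show p - 1 - (p - 1) = 0 from by omega, pow_zero, one_mul]
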